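/- Let V be a finite-dimensional real vector space and let R : V × V → End(V) be a bilinear map (a curvature-type tensor) that is antisymmetric in its two vector arguments and, with respect to some inner product g on V, satisfies g(R(x,y)u, v) = -g(R(x,y)v, u) for all x,y,u,v. Then for every odd positive integer k, the 2k-form obtained by fully antisymmetrizing (x₁,...,x_{2k}) ↦ tr(R(x₁,x₂) ∘ R(x₃,x₄) ∘ ⋯ ∘ R(x_{2k-1},x_{2k})) vanishes identically. -/

import Mathlib

open Finset

/-- The `k`-th Chern-type curvature form of a curvature-type tensor
`R : V × V → End(V)`: the full antisymmetrization of
`(x₁,…,x_{2k}) ↦ tr(R(x₁,x₂) ∘ ⋯ ∘ R(x_{2k-1},x_{2k}))`. -/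
noncomputable def chernForm {V : Type*} [AddCommGroup V] [Module ℝ V]
    (k : ℕ) (R : V → V → Module.End ℝ V) (x : Fin (2 * k) → V) : ℝ :=
  ∑ σ : Equiv.Perm (Fin (2 * k)), ((Equiv.Perm.sign σ : ℤ) : ℝ) *
    LinearMap.trace ℝ V
      ((List.ofFn fun i : Fin k =>
        R (x (σ ⟨2 * i, by have := i.isLt; omega⟩))
          (x (σ ⟨2 * i + 1, by have := i.isLt; omega⟩))).prod)

section Aux

/-- `List.ofFn` composed with `Fin.rev` is the reverse. -/
lemma aux_ofFn_rev {α : Type*} {n : ℕ} (f : Fin n → α) :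
    List.ofFn (fun i => f i.rev) = (List.ofFn f).reverse := by
  apply List.ext_getElem
  · simp
  · intro i h1 h2
    simp only [List.length_ofFn] at h1
    simp only [List.getElem_ofFn, List.getElem_reverse, List.length_ofFn]
    congr 1
    ext
    simp [Fin.val_rev]
    omega

/-- `(-1)^a = (-1)^b` in `ℤˣ` when `a ≡ b [MOD 2]`. -/
lemma aux_neg_one_pow_congr (a b : ℕ) (h : a % 2 = b % 2) :
    ((-1 : ℤˣ)) ^ a = (-1) ^ b := by
  rcases Nat.even_or_odd a with ha | ha
  · have hb : Even b := by
      rw [Nat.even_iff] at ha ⊢; omega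
    rw [Even.neg_one_pow ha, Even.neg_one_pow hb]
  · have hb : Odd b := by
      rw [Nat.odd_iff] at ha ⊢; omega
    rw [Odd.neg_one_pow ha, Odd.neg_one_pow hb]

/-- Sign of `Fin.revPerm`. -/
lemma aux_sign_revPerm : ∀ n : ℕ,
    Equiv.Perm.sign (Fin.revPerm : Equiv.Perm (Fin n)) = (-1) ^ (n / 2) := by
  intro n
  induction n with
  | zero => simp [Subsingleton.elim (Fin.revPerm : Equiv.Perm (Fin 0)) 1]
  | succ n ih =>
    match n, ih with
    | 0, _ => simp [Subsingleton.elim (Fin.revPerm : Equiv.Perm (Fin 1)) 1]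
    | (m + 1), ih =>
      have key : (Fin.revPerm : Equiv.Perm (Fin (m + 1 + 1))) =
          Equiv.Perm.decomposeFin.symm (⟨m + 1, Nat.lt_succ_self _⟩,
            (Fin.revPerm : Equiv.Perm (Fin (m + 1))) * finRotate (m + 1)) := by
        ext j
        refine Fin.cases ?_ ?_ j
        · simp [Fin.ext_iff, Fin.val_rev]
        · intro i
          rw [Equiv.Perm.decomposeFin_symm_apply_succ]
          rcases Nat.lt_or_ge (i : ℕ) m with hlt | hge
          · have hrot : ((finRotate (m + 1)) i : ℕ) = (i : ℕ) + 1 := by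
              rw [finRotate_succ_apply, Fin.val_add_one_of_lt
                (by simp [Fin.lt_iff_val_lt_val]; omega)]
            have h1 : (((Fin.revPerm : Equiv.Perm (Fin (m + 1))) * finRotate (m + 1)) i : ℕ) = m - 1 - (i : ℕ) := by
              simp only [Equiv.Perm.mul_apply, Fin.revPerm_apply, Fin.val_rev, hrot]
              omega
            have hne0 : (((Fin.revPerm : Equiv.Perm (Fin (m + 1))) * finRotate (m + 1)) i).succ ≠
                (0 : Fin (m + 1 + 1)) := Fin.succ_ne_zero _
            have hnen : (((Fin.revPerm : Equiv.Perm (Fin (m + 1))) * finRotate (m + 1)) i).succ ≠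
                (⟨m + 1, Nat.lt_succ_self _⟩ : Fin (m + 1 + 1)) := by
              intro hcon
              have := congrArg Fin.val hcon
              simp only [Fin.val_succ, h1] at this
              omega
            rw [Equiv.swap_apply_of_ne_of_ne hne0 hnen]
            simp only [Fin.revPerm_apply, Fin.val_rev, Fin.val_succ, h1]
            omega
          · -- i = m, i.e. the last element of Fin (m+1)
            have hi : (i : ℕ) = m := by have := i.isLt; omega
            have hrot : ((finRotate (m + 1)) i : ℕ) = 0 := by
              rw [finRotate_succ_apply]
              have hlast : i = Fin.last m := by apply Fin.ext; simp [hi]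
              rw [hlast]
              simp [Fin.last_add_one]
            have h1 : (((Fin.revPerm : Equiv.Perm (Fin (m + 1))) * finRotate (m + 1)) i : ℕ) = m := by
              simp only [Equiv.Perm.mul_apply, Fin.revPerm_apply, Fin.val_rev, hrot]
              omega
            have h2 : (((Fin.revPerm : Equiv.Perm (Fin (m + 1))) * finRotate (m + 1)) i).succ =
                (⟨m + 1, Nat.lt_succ_self _⟩ : Fin (m + 1 + 1)) := by
              apply Fin.ext; simp only [Fin.val_succ, h1]
            rw [h2, Equiv.swap_apply_right]
            simp [Fin.revPerm_apply, Fin.val_rev, Fin.val_succ, hi]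
      have hne : (⟨m + 1, Nat.lt_succ_self _⟩ : Fin (m + 1 + 1)) ≠ 0 := by
        intro h; have := congrArg Fin.val h; simp at this
      rw [key, Equiv.Perm.decomposeFin.symm_sign, if_neg hne, map_mul, ih,
        sign_finRotate]
      have step : (-1 : ℤˣ) * ((-1) ^ ((m + 1) / 2) * (-1) ^ m) =
          (-1 : ℤˣ) ^ (1 + ((m + 1) / 2 + m)) := by
        rw [pow_add, pow_add, pow_one]
      rw [Nat.add_sub_cancel, step]
      exact aux_neg_one_pow_congr _ _
        (by rcases Nat.even_or_odd m with ⟨t, rfl⟩ | ⟨t, rfl⟩ <;> omega)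

variable {V : Type*} [AddCommGroup V] [Module ℝ V] [FiniteDimensional ℝ V]

/-- Traces of a `g`-adjoint pair agree when `g` is nondegenerate. -/
lemma aux_trace_eq_of_isAdjointPair (g : LinearMap.BilinForm ℝ V)
    (hg : g.Nondegenerate) {f h : Module.End ℝ V}
    (hfh : LinearMap.IsAdjointPair g g f h) :
    LinearMap.trace ℝ V f = LinearMap.trace ℝ V h := by
  set t := g.toDual hg with ht
  have key : t.conj f = Module.Dual.transpose (R := ℝ) h := by
    ext φ y
    have h1 : (t.conj f) φ = t (f (t.symm φ)) := by
      simp [LinearEquiv.conj_apply]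
    rw [h1]
    have h2 : (t (f (t.symm φ))) y = g (f (t.symm φ)) y := by
      rw [ht]; exact LinearMap.BilinForm.toDual_def hg
    rw [h2, hfh (t.symm φ) y]
    have h3 : g (t.symm φ) (h y) = (t (t.symm φ)) (h y) := by
      rw [ht]; exact (LinearMap.BilinForm.toDual_def hg).symm
    rw [h3, LinearEquiv.apply_symm_apply]
    rfl
  calc LinearMap.trace ℝ V f = LinearMap.trace ℝ _ (t.conj f) :=
        (LinearMap.trace_conj' f t).symm
    _ = LinearMap.trace ℝ _ (Module.Dual.transpose (R := ℝ) h) := by rw [key]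
    _ = LinearMap.trace ℝ V h := LinearMap.trace_transpose' h

/-- The adjoint of a product of `g`-skew endomorphisms. -/
lemma aux_isAdjointPair_list_prod (g : LinearMap.BilinForm ℝ V)
    (L : List (Module.End ℝ V))
    (hL : ∀ a ∈ L, LinearMap.IsAdjointPair g g a (-a)) :
    LinearMap.IsAdjointPair g g L.prod ((L.map (fun a => -a)).reverse.prod) := by
  induction L with
  | nil => intro u v; simp
  | cons a L ih =>
    have ha : LinearMap.IsAdjointPair g g a (-a : Module.End ℝ V) := by
      rw [LinearMap.coe_neg]; exact hL a List.mem_cons_self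
    have ih' := ih (fun b hb => hL b (List.mem_cons_of_mem a hb))
    have := LinearMap.IsAdjointPair.mul ha ih'
    simpa [List.prod_cons, List.reverse_cons, List.prod_append] using this

end Aux

/-- If a curvature-type tensor `R` is antisymmetric in its two vector arguments and
is `g`-skew as an endomorphism for some inner product `g`, then for every odd
positive integer `k` the fully antisymmetrized Chern-type `2k`-form of `R`
vanishes identically. -/
theorem stmt0 {V : Type*} [AddCommGroup V] [Module ℝ V] [FiniteDimensional ℝ V]
    (R : V →ₗ[ℝ] V →ₗ[ℝ] Module.End ℝ V)
    (hskew : ∀ x y : V, R x y = - R y x)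
    (g : V →ₗ[ℝ] V →ₗ[ℝ] ℝ)
    (hgsymm : ∀ u v : V, g u v = g v u)
    (hgpos : ∀ v : V, v ≠ 0 → 0 < g v v)
    (hRg : ∀ x y u v : V, g (R x y u) v = - g (R x y v) u) :
    ∀ k : ℕ, Odd k → 0 < k →
      ∀ x : Fin (2 * k) → V, chernForm k (fun a b => R a b) x = 0 := by
  intro k hodd hpos x
  -- nondegeneracy of g
  have hg : LinearMap.BilinForm.Nondegenerate (g : LinearMap.BilinForm ℝ V) := by
    refine ⟨?_, ?_⟩ <;>
    intro m hm <;>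
    by_contra hm0 <;>
    exact absurd (hm m) (ne_of_gt (hgpos m hm0))
  -- skewness of each R a b
  have hRskew : ∀ a b : V, LinearMap.IsAdjointPair g g (R a b) (-(R a b)) := by
    intro a b u v
    simp only [LinearMap.neg_apply, Pi.neg_apply, map_neg]
    rw [hRg a b u v, hgsymm (R a b v) u]
  -- abbreviation for the factors
  set A : Equiv.Perm (Fin (2 * k)) → Fin k → Module.End ℝ V :=
    fun σ i => R (x (σ ⟨2 * i, by have := i.isLt; omega⟩))
      (x (σ ⟨2 * i + 1, by have := i.isLt; omega⟩)) with hA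
  have hsum : chernForm k (fun a b => R a b) x =
      ∑ σ : Equiv.Perm (Fin (2 * k)), ((Equiv.Perm.sign σ : ℤ) : ℝ) *
        LinearMap.trace ℝ V (List.ofFn (A σ)).prod := rfl
  set F : Equiv.Perm (Fin (2 * k)) → ℝ := fun σ =>
    ((Equiv.Perm.sign σ : ℤ) : ℝ) * LinearMap.trace ℝ V (List.ofFn (A σ)).prod with hF
  -- the reversal permutation
  set τ : Equiv.Perm (Fin (2 * k)) := Fin.revPerm with hτ
  have hsignτ : Equiv.Perm.sign τ = -1 := by
    rw [hτ, aux_sign_revPerm]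
    have h2 : 2 * k / 2 = k := by omega
    rw [h2, Odd.neg_one_pow hodd]
  -- key pointwise identity
  have hkey : ∀ σ : Equiv.Perm (Fin (2 * k)), F (σ * τ) = - F σ := by
    intro σ
    have hlist : List.ofFn (A (σ * τ)) =
        ((List.ofFn (A σ)).map (fun a => -a)).reverse := by
      have h1 : ∀ i : Fin k, A (σ * τ) i = - A σ i.rev := by
        intro i
        have hv := i.isLt
        have e1 : (τ (⟨2 * i, by omega⟩ : Fin (2 * k))) =
            (⟨2 * (i.rev : ℕ) + 1, by
              have := (i.rev).isLt; omega⟩ : Fin (2 * k)) := by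
          ext
          simp [hτ, Fin.val_rev]
          omega
        have e2 : (τ (⟨2 * i + 1, by omega⟩ : Fin (2 * k))) =
            (⟨2 * (i.rev : ℕ), by have := (i.rev).isLt; omega⟩ : Fin (2 * k)) := by
          ext
          simp [hτ, Fin.val_rev]
          omega
        simp only [hA, Equiv.Perm.mul_apply, e1, e2]
        exact hskew _ _
      calc List.ofFn (A (σ * τ)) = List.ofFn (fun i => - A σ i.rev) := by
            exact List.ofFn_congr rfl _ ▸ congrArg List.ofFn (funext h1)
        _ = List.ofFn (fun i => (fun j => - A σ j) i.rev) := rfl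
        _ = (List.ofFn (fun j => - A σ j)).reverse := aux_ofFn_rev (fun j => - A σ j)
        _ = ((List.ofFn (A σ)).map (fun a => -a)).reverse := by
            rw [List.map_ofFn]; rfl
    have htr : LinearMap.trace ℝ V (List.ofFn (A (σ * τ))).prod =
        LinearMap.trace ℝ V (List.ofFn (A σ)).prod := by
      rw [hlist]
      refine (aux_trace_eq_of_isAdjointPair g hg ?_).symm
      refine aux_isAdjointPair_list_prod g _ ?_
      intro a ha
      rw [List.mem_ofFn] at ha
      obtain ⟨i, rfl⟩ := ha
      exact hRskew _ _
    rw [hF]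
    simp only
    rw [htr, map_mul, hsignτ]
    push_cast
    ring
  -- reindex the sum by right multiplication with τ
  have hre : ∑ σ : Equiv.Perm (Fin (2 * k)), F σ =
      ∑ σ : Equiv.Perm (Fin (2 * k)), F (σ * τ) :=
    (Fintype.sum_equiv (Equiv.mulRight τ) _ _ (fun σ => rfl)).symm
  have : ∑ σ : Equiv.Perm (Fin (2 * k)), F σ =
      - ∑ σ : Equiv.Perm (Fin (2 * k)), F σ := by
    conv_lhs => rw [hre]
    rw [← Finset.sum_neg_distrib]
    exact Finset.sum_congr rfl (fun σ _ => hkey σ)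
  have hzero : ∑ σ : Equiv.Perm (Fin (2 * k)), F σ = 0 := by linarith
  rw [hsum]
  exact hzero
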